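/- For σ_n = 1 - (3n² - 3n + 2)/(n(n-1)²(n+2)) and μ_n = 2/((n-1)²(n+2)), define for λ ∈ (0,1) the function f(n, λ) = (λμ_n + (1-λ)μ_{n+1}) / (1 - λσ_n - (1-λ)σ_{n+1})^{3/2}. Then for every integer n ≥ 5 and every λ ∈ [0,1], f(n, λ) ≤ (2/3^{3/2}) · n^{1/2}(n+1)^{3/2} / (n² + 1). -/

import Mathlib

noncomputable def σHB (n : ℕ) : ℝ :=
  1 - (3 * (n:ℝ)^2 - 3 * n + 2) / ((n:ℝ) * ((n:ℝ) - 1)^2 * ((n:ℝ) + 2))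

noncomputable def μHB (n : ℕ) : ℝ := 2 / (((n:ℝ) - 1)^2 * ((n:ℝ) + 2))

noncomputable def fB (n : ℕ) (lam : ℝ) : ℝ :=
  (lam * μHB n + (1 - lam) * μHB (n + 1)) /
    (1 - lam * σHB n - (1 - lam) * σHB (n + 1)) ^ ((3/2 : ℝ))

lemma pow32 (x s : ℝ) (hs : 0 < s) (hsx : s^2 = x) : x ^ ((3/2 : ℝ)) = s^3 := by
  rw [← hsx, ← Real.rpow_natCast s 2, ← Real.rpow_mul hs.le, ← Real.rpow_natCast s 3]
  norm_num

lemma pow12 (x s : ℝ) (hs : 0 < s) (hsx : s^2 = x) : x ^ ((1/2 : ℝ)) = s := by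
  rw [← hsx, ← Real.rpow_natCast s 2, ← Real.rpow_mul hs.le]
  norm_num

theorem f_bound (n : ℕ) (hn : 5 ≤ n) (lam : ℝ) (hlam0 : 0 ≤ lam) (hlam1 : lam ≤ 1) :
    fB n lam ≤ (2 / 3 ^ ((3/2 : ℝ))) *
      ((n:ℝ) ^ ((1/2 : ℝ)) * ((n:ℝ) + 1) ^ ((3/2 : ℝ)) / ((n:ℝ)^2 + 1)) := by
  have hN : (5:ℝ) ≤ (n:ℝ) := by exact_mod_cast hn
  set N : ℝ := (n:ℝ) with hNdef
  have h1 : (0:ℝ) < N := by linarith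
  have h2 : (0:ℝ) < N - 1 := by linarith
  have h3 : (0:ℝ) < N + 2 := by linarith
  have h4 : (0:ℝ) < N + 3 := by linarith
  have h5 : (0:ℝ) < N + 1 := by linarith
  have h6 : (0:ℝ) < N^2 + 1 := by positivity
  have h1' : N ≠ 0 := ne_of_gt h1
  have h2' : N - 1 ≠ 0 := ne_of_gt h2
  have h3' : N + 2 ≠ 0 := ne_of_gt h3
  have h4' : N + 3 ≠ 0 := ne_of_gt h4
  have h5' : N + 1 ≠ 0 := ne_of_gt h5
  have h6' : N^2 + 1 ≠ 0 := ne_of_gt h6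
  set A : ℝ := (3*N^2 - 3*N + 2) / (N*(N-1)^2*(N+2)) with hAdef
  set B : ℝ := (3*N^2 + 3*N + 2) / ((N+1)*N^2*(N+3)) with hBdef
  have hApos : 0 < A := by
    rw [hAdef]; apply div_pos (by nlinarith) (by positivity)
  have hBpos : 0 < B := by
    rw [hBdef]; apply div_pos (by nlinarith) (by positivity)
  have hy_eq : 1 - lam * σHB n - (1 - lam) * σHB (n+1) = lam * A + (1-lam) * B := by
    simp only [σHB, hAdef, hBdef]
    push_cast
    rw [← hNdef]
    ring
  have hx_eq : lam * μHB n + (1 - lam) * μHB (n+1)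
      = (N+1)/(N^2+1) * (lam * A + (1-lam) * B) - 1/(N*(N^2+1)) := by
    simp only [μHB, hAdef, hBdef]
    push_cast
    rw [← hNdef]
    field_simp
    ring_nf
    field_simp
    ring
  set y : ℝ := lam * A + (1-lam) * B with hydef
  have hy : 0 < y := by
    rcases eq_or_lt_of_le hlam1 with h | h
    · rw [hydef, h]; norm_num; linarith
    · rw [hydef]
      have e1 : 0 ≤ lam * A := mul_nonneg hlam0 hApos.le
      have e2 : 0 < (1 - lam) * B := mul_pos (by linarith) hBpos
      linarith
  obtain ⟨t, ht, ht2⟩ : ∃ t : ℝ, 0 < t ∧ t^2 = y :=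
    ⟨Real.sqrt y, Real.sqrt_pos.2 hy, Real.sq_sqrt hy.le⟩
  obtain ⟨u, hu, hu2⟩ : ∃ u : ℝ, 0 < u ∧ u^2 = 3 :=
    ⟨Real.sqrt 3, Real.sqrt_pos.2 (by norm_num), Real.sq_sqrt (by norm_num)⟩
  obtain ⟨v, hv, hv2⟩ : ∃ v : ℝ, 0 < v ∧ v^2 = N :=
    ⟨Real.sqrt N, Real.sqrt_pos.2 h1, Real.sq_sqrt h1.le⟩
  obtain ⟨w, hw, hw2⟩ : ∃ w : ℝ, 0 < w ∧ w^2 = N + 1 :=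
    ⟨Real.sqrt (N+1), Real.sqrt_pos.2 h5, Real.sq_sqrt h5.le⟩
  have goal_eq : fB n lam = (lam * μHB n + (1 - lam) * μHB (n+1)) /
      (1 - lam * σHB n - (1 - lam) * σHB (n+1)) ^ ((3/2 : ℝ)) := rfl
  rw [goal_eq, hy_eq, hx_eq, pow32 y t ht ht2, pow32 3 u hu hu2, pow12 N v hv hv2,
    pow32 (N+1) w hw hw2, ← ht2]
  rw [div_le_iff₀ (by positivity : (0:ℝ) < t^3)]
  have hD : (0:ℝ) < u^3 * N * (N^2+1) := by positivity
  rw [← mul_le_mul_iff_of_pos_right hD]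
  have hclear1 : ((N+1)/(N^2+1) * t^2 - 1/(N*(N^2+1))) * (u^3 * N * (N^2+1))
      = u^3 * N * (N+1) * t^2 - u^3 := by field_simp
  have hclear2 : (2 / u^3 * (v * w^3 / (N^2+1)) * t^3) * (u^3 * N * (N^2+1))
      = 2 * N * v * w^3 * t^3 := by field_simp
  rw [hclear1, hclear2]
  have hid : 2 * N * v * w^3 * t^3 - (u^3 * N * (N+1) * t^2 - u^3)
      = (v*w*t - u)^2 * (2*v*w*t + u) := by
    linear_combination (-(u*N*(N+1)*t^2)) * hu2 + (-2*v*w^3*t^3 + 3*u*(N+1)*t^2) * hv2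
      + (3*u*v^2*t^2) * hw2
  have hpos : 0 ≤ (v*w*t - u)^2 * (2*v*w*t + u) := by positivity
  linarith
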